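/- Let (X, μ) be a σ-finite measure space and p : X → ℝ measurable with 1 < p⁻ ≤ p(x) ≤ p⁺ < ∞. Suppose (wₙ) is a sequence in L^{p(x)}(X,μ) with wₙ → w a.e. on X and ∫_X |wₙ|^{p(x)} dμ → ∫_X |w|^{p(x)} dμ < ∞. Then ∫_X |wₙ - w|^{p(x)} dμ → 0, and hence wₙ → w in the Luxemburg norm of L^{p(x)}(X,μ). -/

import Mathlib

open MeasureTheory Filter

/-- The modular `ρ(w) = ∫ |w(x)|^{p(x)} dμ` of a variable exponent Lebesgue space. -/
noncomputable def vModular {X : Type*} [MeasurableSpace X] (μ : Measure X)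
    (p w : X → ℝ) : ENNReal :=
  ∫⁻ x, ENNReal.ofReal (|w x| ^ p x) ∂μ

/-- The Luxemburg norm `‖w‖ = inf {λ > 0 : ρ(w/λ) ≤ 1}`. -/
noncomputable def luxNorm {X : Type*} [MeasurableSpace X] (μ : Measure X)
    (p w : X → ℝ) : ℝ :=
  sInf {l : ℝ | 0 < l ∧ vModular μ p (fun x => w x / l) ≤ 1}

/-- Membership in the variable exponent Lebesgue space `L^{p(x)}(X, μ)`. -/
def MemLp' {X : Type*} [MeasurableSpace X] (μ : Measure X) (p w : X → ℝ) : Prop :=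
  Measurable w ∧ ∃ l : ℝ, 0 < l ∧ vModular μ p (fun x => w x / l) < ⊤

/-- Brezis–Lieb type lemma in variable exponent Lebesgue spaces: if `wₙ → w`
a.e. and the modulars converge, `ρ(wₙ) → ρ(w) < ∞`, then `ρ(wₙ - w) → 0` and
`wₙ → w` in the Luxemburg norm. -/
theorem brezis_lieb_variable_exponent {X : Type*} [MeasurableSpace X]
    (μ : Measure X) [SigmaFinite μ]
    (p : X → ℝ) (pm pM : ℝ) (hp : Measurable p)
    (hpm : 1 < pm) (hbd : ∀ x, pm ≤ p x ∧ p x ≤ pM)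
    (wn : ℕ → X → ℝ) (w : X → ℝ)
    (hwn : ∀ n, MemLp' μ p (wn n)) (hw : Measurable w)
    (hae : ∀ᵐ x ∂μ, Tendsto (fun n => wn n x) atTop (nhds (w x)))
    (hfin : vModular μ p w < ⊤)
    (hmod : Tendsto (fun n => vModular μ p (wn n)) atTop (nhds (vModular μ p w))) :
    Tendsto (fun n => vModular μ p (fun x => wn n x - w x)) atTop (nhds 0) ∧
      Tendsto (fun n => luxNorm μ p (fun x => wn n x - w x)) atTop (nhds 0) := by
  have hqpos : ∀ x, 0 < p x := fun x =>
    lt_of_lt_of_le (lt_trans zero_lt_one hpm) (hbd x).1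
  have hwnm : ∀ n, Measurable (wn n) := fun n => (hwn n).1
  -- real versions
  set F : ℕ → X → ℝ := fun n x => |wn n x - w x| ^ p x with hFdef
  set G : ℕ → X → ℝ := fun n x => 2 ^ pM * (|wn n x| ^ p x + |w x| ^ p x) with hGdef
  set Gl : X → ℝ := fun x => 2 ^ pM * (|w x| ^ p x + |w x| ^ p x) with hGldef
  have hF0 : ∀ n x, 0 ≤ F n x := fun n x => Real.rpow_nonneg (abs_nonneg _) _
  have habs0 : ∀ (u : X → ℝ) x, (0:ℝ) ≤ |u x| ^ p x := fun u x =>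
    Real.rpow_nonneg (abs_nonneg _) _
  -- pointwise bound F ≤ G
  have hFG : ∀ n x, F n x ≤ G n x := by
    intro n x
    set a := wn n x; set b := w x; set q := p x
    have hq : 0 < q := hqpos x
    have h1 : |a - b| ≤ 2 * max |a| |b| := by
      calc |a - b| ≤ |a| + |b| := abs_sub _ _
        _ ≤ 2 * max |a| |b| := by
            rcases le_total |a| |b| with h | h <;>
              simp [max_eq_right, max_eq_left, h] <;> nlinarith [abs_nonneg a, abs_nonneg b]
    have h2 : |a - b| ^ q ≤ (2 * max |a| |b|) ^ q :=
      Real.rpow_le_rpow (abs_nonneg _) h1 hq.le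
    have h3 : (2 * max |a| |b|) ^ q = 2 ^ q * (max |a| |b|) ^ q :=
      Real.mul_rpow (by norm_num) (le_max_of_le_left (abs_nonneg a))
    have h4 : (max |a| |b|) ^ q ≤ |a| ^ q + |b| ^ q := by
      rcases max_cases |a| |b| with ⟨he, _⟩ | ⟨he, _⟩ <;> rw [he]
      · nlinarith [Real.rpow_nonneg (abs_nonneg b) q]
      · nlinarith [Real.rpow_nonneg (abs_nonneg a) q]
    have h5 : (2:ℝ) ^ q ≤ 2 ^ pM :=
      Real.rpow_le_rpow_of_exponent_le (by norm_num) (hbd x).2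
    have h2q0 : (0:ℝ) ≤ 2 ^ q := Real.rpow_nonneg (by norm_num) _
    calc |a - b| ^ q ≤ 2 ^ q * (max |a| |b|) ^ q := by rw [← h3]; exact h2
      _ ≤ 2 ^ pM * (|a| ^ q + |b| ^ q) := by
          apply mul_le_mul h5 h4 (Real.rpow_nonneg (le_max_of_le_left (abs_nonneg a)) q)
          positivity
  -- ENNReal versions
  set c : ENNReal := ENNReal.ofReal (2 ^ pM) with hcdef
  have hcne : c ≠ ⊤ := ENNReal.ofReal_ne_top
  set f : ℕ → X → ENNReal := fun n x => ENNReal.ofReal (F n x) with hfdef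
  set g : ℕ → X → ENNReal := fun n x => ENNReal.ofReal (G n x) with hgdef
  set gl : X → ENNReal := fun x => ENNReal.ofReal (Gl x) with hgldef
  have hmeas_mod : ∀ (u : X → ℝ), Measurable u →
      Measurable fun x => ENNReal.ofReal (|u x| ^ p x) := fun u hu =>
    (hu.abs.pow hp).ennreal_ofReal
  have hfm : ∀ n, Measurable (f n) := fun n => hmeas_mod _ ((hwnm n).sub hw)
  have hgm : ∀ n, Measurable (g n) := by
    intro n
    exact ((measurable_const.mul
      (((hwnm n).abs.pow hp).add (hw.abs.pow hp)))).ennreal_ofReal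
  have hfg : ∀ n x, f n x ≤ g n x := fun n x => ENNReal.ofReal_le_ofReal (hFG n x)
  -- integral of g n
  have hGsplit : ∀ n, (∫⁻ x, g n x ∂μ) = c * (vModular μ p (wn n) + vModular μ p w) := by
    intro n
    have : ∀ x, g n x = c * (ENNReal.ofReal (|wn n x| ^ p x)
        + ENNReal.ofReal (|w x| ^ p x)) := by
      intro x
      rw [hgdef]
      simp only [hGdef]
      rw [ENNReal.ofReal_mul (Real.rpow_nonneg (by norm_num) _),
        ENNReal.ofReal_add (habs0 _ x) (habs0 _ x)]
    simp only [this]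
    rw [lintegral_const_mul c (f := fun x => ENNReal.ofReal (|wn n x| ^ p x) + ENNReal.ofReal (|w x| ^ p x)) ((hmeas_mod _ (hwnm n)).add (hmeas_mod _ hw)),
      lintegral_add_left (hmeas_mod _ (hwnm n))]
    rfl
  have hGlint : (∫⁻ x, gl x ∂μ) = c * (vModular μ p w + vModular μ p w) := by
    have : ∀ x, gl x = c * (ENNReal.ofReal (|w x| ^ p x)
        + ENNReal.ofReal (|w x| ^ p x)) := by
      intro x
      rw [hgldef]
      simp only [hGldef]
      rw [ENNReal.ofReal_mul (Real.rpow_nonneg (by norm_num) _),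
        ENNReal.ofReal_add (habs0 _ x) (habs0 _ x)]
    simp only [this]
    rw [lintegral_const_mul c (f := fun x => ENNReal.ofReal (|w x| ^ p x) + ENNReal.ofReal (|w x| ^ p x)) ((hmeas_mod _ hw).add (hmeas_mod _ hw)),
      lintegral_add_left (hmeas_mod _ hw)]
    rfl
  have hGlfin : (∫⁻ x, gl x ∂μ) ≠ ⊤ := by
    rw [hGlint]
    exact ENNReal.mul_ne_top hcne (ENNReal.add_ne_top.2 ⟨hfin.ne, hfin.ne⟩)
  -- tendsto of ∫ g n
  have hGtend : Tendsto (fun n => ∫⁻ x, g n x ∂μ) atTop (nhds (∫⁻ x, gl x ∂μ)) := by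
    simp only [hGsplit, hGlint]
    exact ENNReal.Tendsto.const_mul (hmod.add tendsto_const_nhds) (Or.inr hcne)
  -- a.e. convergence facts
  have haeconv : ∀ᵐ x ∂μ, Tendsto (fun n => g n x - f n x) atTop (nhds (gl x)) ∧
      Tendsto (fun n => f n x) atTop (nhds 0) := by
    filter_upwards [hae] with x hx
    have hq : 0 < p x := hqpos x
    have hcont : ContinuousAt (fun t : ℝ => t ^ p x) |w x - w x| := by
      exact Real.continuousAt_rpow_const _ _ (Or.inr hq.le)
    have hcont2 : ContinuousAt (fun t : ℝ => t ^ p x) |w x| :=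
      Real.continuousAt_rpow_const _ _ (Or.inr hq.le)
    have habs : Tendsto (fun n => |wn n x - w x|) atTop (nhds |w x - w x|) :=
      ((hx.sub tendsto_const_nhds).abs)
    have hFt : Tendsto (fun n => F n x) atTop (nhds 0) := by
      have := hcont.tendsto.comp habs
      simpa [hFdef, Function.comp_def, Real.zero_rpow hq.ne'] using this
    have habs2 : Tendsto (fun n => |wn n x|) atTop (nhds |w x|) := hx.abs
    have hGt : Tendsto (fun n => G n x) atTop (nhds (Gl x)) := by
      have h1 : Tendsto (fun n => |wn n x| ^ p x) atTop (nhds (|w x| ^ p x)) :=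
        hcont2.tendsto.comp habs2
      simpa [hGdef, hGldef] using (h1.add tendsto_const_nhds).const_mul ((2:ℝ) ^ pM)
    constructor
    · have hsub : Tendsto (fun n => G n x - F n x) atTop (nhds (Gl x - 0)) :=
        hGt.sub hFt
      have heq : ∀ n, g n x - f n x = ENNReal.ofReal (G n x - F n x) := fun n =>
        (ENNReal.ofReal_sub _ (hF0 n x)).symm
      simp only [heq]
      rw [show gl x = ENNReal.ofReal (Gl x - 0) by simp [hgldef]]
      exact (ENNReal.continuous_ofReal.tendsto _).comp hsub
    · have : Tendsto (fun n => ENNReal.ofReal (F n x)) atTop (nhds (ENNReal.ofReal 0)) :=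
        (ENNReal.continuous_ofReal.tendsto _).comp hFt
      simpa using this
  -- Fatou: ∫ gl ≤ liminf ∫ (g n - f n)
  have hdm : ∀ n, Measurable (fun x => g n x - f n x) := fun n => (hgm n).sub (hfm n)
  have hfatou : (∫⁻ x, gl x ∂μ) ≤ liminf (fun n => ∫⁻ x, g n x - f n x ∂μ) atTop := by
    have h1 : (∫⁻ x, gl x ∂μ) = ∫⁻ x, liminf (fun n => g n x - f n x) atTop ∂μ := by
      apply lintegral_congr_ae
      filter_upwards [haeconv] with x hx
      exact (hx.1.liminf_eq).symm
    rw [h1]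
    exact lintegral_liminf_le hdm
  -- limsup ∫ (g n - f n) ≤ ∫ gl
  have hlimsup : limsup (fun n => ∫⁻ x, g n x - f n x ∂μ) atTop ≤ ∫⁻ x, gl x ∂μ := by
    have h1 : limsup (fun n => ∫⁻ x, g n x - f n x ∂μ) atTop
        ≤ limsup (fun n => ∫⁻ x, g n x ∂μ) atTop := by
      exact limsup_le_limsup
        (Eventually.of_forall fun n => lintegral_mono fun x => tsub_le_self)
        isCobounded_le_of_bot isBounded_le_of_top
    rw [hGtend.limsup_eq] at h1
    exact h1
  have hdiff_tend : Tendsto (fun n => ∫⁻ x, g n x - f n x ∂μ) atTop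
      (nhds (∫⁻ x, gl x ∂μ)) :=
    tendsto_of_le_liminf_of_limsup_le hfatou hlimsup
  -- ∫ f n = ∫ g n - ∫ (g n - f n) eventually
  have hsum : ∀ n, (∫⁻ x, f n x ∂μ) + (∫⁻ x, g n x - f n x ∂μ) = ∫⁻ x, g n x ∂μ := by
    intro n
    rw [← lintegral_add_left (hfm n)]
    apply lintegral_congr fun x => ?_
    exact add_tsub_cancel_of_le (hfg n x)
  have hev : ∀ᶠ n in atTop, (∫⁻ x, f n x ∂μ)
      = (∫⁻ x, g n x ∂μ) - (∫⁻ x, g n x - f n x ∂μ) := by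
    have hgev : ∀ᶠ n in atTop, (∫⁻ x, g n x ∂μ) < (∫⁻ x, gl x ∂μ) + 1 :=
      hGtend.eventually_lt_const (by simpa using ENNReal.lt_add_right hGlfin one_ne_zero)
    filter_upwards [hgev] with n hn
    have hd_ne : (∫⁻ x, g n x - f n x ∂μ) ≠ ⊤ := by
      refine ne_of_lt (lt_of_le_of_lt (lintegral_mono fun x => tsub_le_self) ?_)
      exact lt_of_lt_of_le hn le_top
    rw [← hsum n, ENNReal.add_sub_cancel_right hd_ne]
  have hveq : ∀ n, vModular μ p (fun x => wn n x - w x) = ∫⁻ x, f n x ∂μ := fun n => rfl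
  have hmain : Tendsto (fun n => vModular μ p (fun x => wn n x - w x)) atTop (nhds 0) := by
    have hsub : Tendsto (fun n => (∫⁻ x, g n x ∂μ) - (∫⁻ x, g n x - f n x ∂μ)) atTop
        (nhds ((∫⁻ x, gl x ∂μ) - (∫⁻ x, gl x ∂μ))) :=
      ENNReal.Tendsto.sub hGtend hdiff_tend (Or.inl hGlfin)
    rw [tsub_self] at hsub
    refine Tendsto.congr' ?_ hsub
    filter_upwards [hev] with n hn
    rw [hveq n, hn]
  refine ⟨hmain, ?_⟩
  have hnn : ∀ n, 0 ≤ luxNorm μ p (fun x => wn n x - w x) := fun n =>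
    Real.sInf_nonneg fun l hl => hl.1.le
  rw [Metric.tendsto_atTop]
  intro ε hε
  set l : ℝ := min (ε / 2) 1 with hldef
  have hl0 : 0 < l := lt_min (by linarith) one_pos
  have hl1 : l ≤ 1 := min_le_right _ _
  have hlε : l < ε := lt_of_le_of_lt (min_le_left _ _) (by linarith)
  have hlpM : (0:ℝ) < l ^ pM := Real.rpow_pos_of_pos hl0 _
  have hpow : (0:ENNReal) < ENNReal.ofReal (l ^ (pM + 1)) :=
    ENNReal.ofReal_pos.2 (Real.rpow_pos_of_pos hl0 _)
  have hev2 := hmain.eventually_lt_const hpow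
  rw [eventually_atTop] at hev2
  obtain ⟨N, hN⟩ := hev2
  refine ⟨N, fun n hn => ?_⟩
  rw [Real.dist_eq, sub_zero, abs_of_nonneg (hnn n)]
  refine lt_of_le_of_lt (csInf_le ⟨0, fun x hx => hx.1.le⟩ ?_) hlε
  refine ⟨hl0, ?_⟩
  -- modular scaling bound
  have hbound : vModular μ p (fun x => (wn n x - w x) / l)
      ≤ ENNReal.ofReal (l ^ pM)⁻¹ * vModular μ p (fun x => wn n x - w x) := by
    rw [hveq n]
    unfold vModular
    rw [← lintegral_const_mul _ (hfm n)]
    apply lintegral_mono fun x => ?_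
    have hq : 0 < p x := hqpos x
    have h1 : |(wn n x - w x) / l| = |wn n x - w x| / l := by
      rw [abs_div, abs_of_pos hl0]
    have h2 : (|wn n x - w x| / l) ^ p x = |wn n x - w x| ^ p x / l ^ p x :=
      Real.div_rpow (abs_nonneg _) hl0.le _
    have h3 : l ^ pM ≤ l ^ p x := Real.rpow_le_rpow_of_exponent_ge hl0 hl1 (hbd x).2
    have h4 : |wn n x - w x| ^ p x / l ^ p x ≤ |wn n x - w x| ^ p x / l ^ pM := by
      gcongr
    have h5 : |wn n x - w x| ^ p x / l ^ pM = (l ^ pM)⁻¹ * |wn n x - w x| ^ p x := by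
      rw [div_eq_inv_mul]
    calc ENNReal.ofReal (|(wn n x - w x) / l| ^ p x)
        ≤ ENNReal.ofReal ((l ^ pM)⁻¹ * |wn n x - w x| ^ p x) := by
          apply ENNReal.ofReal_le_ofReal
          rw [h1, h2, ← h5]; exact h4
      _ = ENNReal.ofReal (l ^ pM)⁻¹ * ENNReal.ofReal (|wn n x - w x| ^ p x) :=
          ENNReal.ofReal_mul (by positivity)
  refine le_trans hbound ?_
  have := (hN n hn).le
  calc ENNReal.ofReal (l ^ pM)⁻¹ * vModular μ p (fun x => wn n x - w x)
      ≤ ENNReal.ofReal (l ^ pM)⁻¹ * ENNReal.ofReal (l ^ (pM + 1)) :=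
        mul_le_mul' le_rfl this
    _ = ENNReal.ofReal ((l ^ pM)⁻¹ * l ^ (pM + 1)) :=
        (ENNReal.ofReal_mul (by positivity)).symm
    _ = ENNReal.ofReal l := by
        rw [Real.rpow_add hl0, Real.rpow_one, inv_mul_cancel_left₀ hlpM.ne']
    _ ≤ 1 := ENNReal.ofReal_le_one.2 hl1
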